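/- In the transactional C++ memory model, weak isolation follows from the other consistency axioms: if hb = (sw ∪ tsw ∪ po)⁺ with tsw = weaklift(ecom, stxn) ⊆ hb, and the axiom HbCom (irreflexive(hb ; com*)) holds, then acyclic(weaklift(com, stxn)) holds. -/

import Mathlib

def relComp {E : Type*} (r s : E → E → Prop) : E → E → Prop :=
  fun a c => ∃ b, r a b ∧ s b c

def relDiff {E : Type*} (r t : E → E → Prop) : E → E → Prop :=
  fun a b => r a b ∧ ¬ t a b

def reflCl {E : Type*} (t : E → E → Prop) : E → E → Prop :=
  fun a b => t a b ∨ a = b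

def weaklift {E : Type*} (r t : E → E → Prop) : E → E → Prop :=
  relComp t (relComp (relDiff r t) t)

def stronglift {E : Type*} (r t : E → E → Prop) : E → E → Prop :=
  relComp (reflCl t) (relComp (relDiff r t) (reflCl t))

def relUnion {E : Type*} (r s : E → E → Prop) : E → E → Prop :=
  fun a b => r a b ∨ s a b

def acyclicRel {E : Type*} (r : E → E → Prop) : Prop :=
  Irreflexive (Relation.TransGen r)

theorem weak_isolation_from_cpp_axioms {E : Type*}
    (po rf co fr sw stxn : E → E → Prop)
    (hstxnSym : ∀ a b, stxn a b → stxn b a)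
    (hstxnTrans : ∀ a b c, stxn a b → stxn b c → stxn a c) :
    let com : E → E → Prop := fun a b => rf a b ∨ co a b ∨ fr a b
    let ecom : E → E → Prop := fun a b => com a b ∨ relComp co rf a b
    let tsw : E → E → Prop := weaklift ecom stxn
    let hb : E → E → Prop := Relation.TransGen (fun a b => sw a b ∨ tsw a b ∨ po a b)
    -- well-formedness: com is acyclic
    acyclicRel com →
    -- HbCom: irreflexive(hb ; com*)
    (∀ a, ¬ relComp hb (Relation.ReflTransGen com) a a) →
    acyclicRel (weaklift com stxn) := by
  intro com ecom tsw hb _ hHbCom a h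
  have hsub : ∀ x y, weaklift com stxn x y → sw x y ∨ tsw x y ∨ po x y := by
    rintro x y ⟨b, hxb, b', ⟨hcom, hns⟩, hb'y⟩
    exact Or.inr (Or.inl ⟨b, hxb, b', ⟨Or.inl hcom, hns⟩, hb'y⟩)
  have hhb : hb a a := Relation.TransGen.mono hsub a a h
  exact hHbCom a ⟨a, hhb, Relation.ReflTransGen.refl⟩
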